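/- Let x̂ ≥ 0 with d_i(x̂) > 0 for all i satisfy the Kuhn–Tucker conditions for minimizing I_A^b over the nonnegative orthant: f_j(x̂) = 1 for every j with x̂_j > 0, and 0 ≤ f_j(x̂) ≤ 1 for every j with x̂_j = 0. Then x̂ is a minimizer of I_A^b on ℝ_+^N, i.e. I_A^b(x̂) ≤ I_A^b(x) for every x ≥ 0 with d_i(x) > 0 for all i. -/
import Mathlib


open Finset Filter Topology

noncomputable def dd {M N : ℕ} (A : Fin M → Fin N → ℝ) (x : Fin N → ℝ) (i : Fin M) : ℝ :=
  ∑ j, A i j * x j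

noncomputable def ff {M N : ℕ} (A : Fin M → Fin N → ℝ) (b : Fin M → ℝ) (x : Fin N → ℝ) (j : Fin N) : ℝ :=
  ∑ i, A i j * b i / dd A x i

noncomputable def EMop {M N : ℕ} (A : Fin M → Fin N → ℝ) (b : Fin M → ℝ) (x : Fin N → ℝ) : Fin N → ℝ :=
  fun j => x j * ff A b x j

noncomputable def KL {N : ℕ} (u v : Fin N → ℝ) : ℝ :=
  (∑ j, u j * Real.log (u j / v j)) - ∑ j, (u j - v j)

noncomputable def IAb {M N : ℕ} (A : Fin M → Fin N → ℝ) (b : Fin M → ℝ) (x : Fin N → ℝ) : ℝ :=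
  (∑ i, b i * Real.log (b i / dd A x i)) - ∑ i, (b i - dd A x i)

noncomputable def finSup0 {ι : Type*} (s : Finset ι) (g : ι → ℝ) : ℝ :=
  if h : s.Nonempty then s.sup' h g else 0

noncomputable def finInf0 {ι : Type*} (s : Finset ι) (g : ι → ℝ) : ℝ :=
  if h : s.Nonempty then s.inf' h g else 0

theorem stmt_11
    (M N : ℕ) (hM : 0 < M) (hN : 0 < N)
    (A : Fin M → Fin N → ℝ) (b : Fin M → ℝ)
    (hA : ∀ i j, 0 ≤ A i j)
    (hcol : ∀ j, ∑ i, A i j = 1)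
    (hrow : ∀ i, ∃ j, 0 < A i j)
    (hb : ∀ i, 0 < b i)
    (xh : Fin N → ℝ) (hxh : ∀ j, 0 ≤ xh j)
    (hd : ∀ i, 0 < dd A xh i)
    (hKT1 : ∀ j, 0 < xh j → ff A b xh j = 1)
    (hKT2 : ∀ j, xh j = 0 → 0 ≤ ff A b xh j ∧ ff A b xh j ≤ 1) :
    ∀ x : Fin N → ℝ, (∀ j, 0 ≤ x j) → (∀ i, 0 < dd A x i) →
      IAb A b xh ≤ IAb A b x := by

  intro x hx hdx
  -- abbreviations
  set dh := dd A xh with hdh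
  set dx := dd A x with hdxdef
  -- per-index convexity inequality
  have key : ∀ i : Fin M,
      b i * Real.log (b i / dh i) - (b i - dh i)
        + (1 - b i / dh i) * (dx i - dh i)
      ≤ b i * Real.log (b i / dx i) - (b i - dx i) := by
    intro i
    have hs : 0 < dh i := hd i
    have ht : 0 < dx i := hdx i
    have hbi : 0 < b i := hb i
    have hlog : Real.log (dx i / dh i) ≤ dx i / dh i - 1 :=
      Real.log_le_sub_one_of_pos (by positivity)
    rw [Real.log_div ht.ne' hs.ne'] at hlog
    have h1 : b i * (Real.log (dx i) - Real.log (dh i)) ≤ b i * (dx i / dh i - 1) :=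
      mul_le_mul_of_nonneg_left hlog hbi.le
    have e : b i * (dx i / dh i - 1) = b i / dh i * (dx i - dh i) := by
      field_simp
    rw [Real.log_div hbi.ne' hs.ne', Real.log_div hbi.ne' ht.ne']
    nlinarith [h1, e]
  have hsum : (∑ i, (b i * Real.log (b i / dh i) - (b i - dh i)
        + (1 - b i / dh i) * (dx i - dh i)))
      ≤ ∑ i, (b i * Real.log (b i / dx i) - (b i - dx i)) :=
    Finset.sum_le_sum fun i _ => key i
  -- rewrite sums
  have hIx : IAb A b x = ∑ i, (b i * Real.log (b i / dx i) - (b i - dx i)) := by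
    simp [IAb, Finset.sum_sub_distrib, hdxdef]
  have hIxh : IAb A b xh = ∑ i, (b i * Real.log (b i / dh i) - (b i - dh i)) := by
    simp [IAb, Finset.sum_sub_distrib, hdh]
  -- key sum identities
  have f1 : ∀ y : Fin N → ℝ, ∑ i, dd A y i = ∑ j, y j := by
    intro y
    simp only [dd]
    rw [Finset.sum_comm]
    refine Finset.sum_congr rfl fun j _ => ?_
    simp [← Finset.sum_mul, hcol j]
  have f2 : ∀ y : Fin N → ℝ, ∑ i, b i / dh i * dd A y i = ∑ j, ff A b xh j * y j := by
    intro y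
    simp only [dd, ff, Finset.mul_sum, Finset.sum_mul]
    rw [Finset.sum_comm]
    refine Finset.sum_congr rfl fun j _ => Finset.sum_congr rfl fun i _ => ?_
    have hrfl : (∑ j', A i j' * xh j') = dh i := rfl
    rw [hrfl]; ring
  have f3 : ∑ i, b i = ∑ j, xh j := by
    have e1 : ∑ i, b i = ∑ i, b i / dh i * dd A xh i := by
      refine Finset.sum_congr rfl fun i _ => ?_
      rw [← hdh, div_mul_cancel₀ _ (hd i).ne']
    rw [e1, f2]
    refine Finset.sum_congr rfl fun j _ => ?_
    rcases (hxh j).lt_or_eq with h | h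
    · rw [hKT1 j h, one_mul]
    · rw [← h, mul_zero]
  -- the sum S is nonnegative
  have hff_le : ∀ j, ff A b xh j ≤ 1 := by
    intro j
    rcases (hxh j).lt_or_eq with h | h
    · exact (hKT1 j h).le
    · exact (hKT2 j h.symm).2
  have hS : ∑ i, (1 - b i / dh i) * (dx i - dh i) = ∑ j, (1 - ff A b xh j) * x j := by
    have expand : ∀ i : Fin M, (1 - b i / dh i) * (dx i - dh i)
        = dx i - dh i - b i / dh i * dx i + b i := by
      intro i
      have : b i / dh i * dh i = b i := div_mul_cancel₀ _ (hd i).ne'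
      nlinarith [this]
    calc ∑ i, (1 - b i / dh i) * (dx i - dh i)
        = (∑ i, dx i) - (∑ i, dh i) - (∑ i, b i / dh i * dx i) + ∑ i, b i := by
          simp only [expand, Finset.sum_add_distrib, Finset.sum_sub_distrib]
      _ = (∑ j, x j) - (∑ j, xh j) - (∑ j, ff A b xh j * x j) + ∑ j, xh j := by
          rw [hdh, hdxdef, f1, f1, f2 x, f3]
      _ = ∑ j, (1 - ff A b xh j) * x j := by
          have e2 : ∑ j, (1 - ff A b xh j) * x j
              = (∑ j, x j) - ∑ j, ff A b xh j * x j := by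
            rw [← Finset.sum_sub_distrib]
            exact Finset.sum_congr rfl fun j _ => by ring
          rw [e2]; ring
  have hS0 : 0 ≤ ∑ j, (1 - ff A b xh j) * x j :=
    Finset.sum_nonneg fun j _ => mul_nonneg (by linarith [hff_le j]) (hx j)
  have : IAb A b xh + ∑ i, (1 - b i / dh i) * (dx i - dh i) ≤ IAb A b x := by
    rw [hIx, hIxh, ← Finset.sum_add_distrib]
    exact hsum
  rw [hS] at this
  linarith
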